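/- Let m ≥ 4 and 0 < l < m. The 4-dimensional Lebesgue volume of the polytope P₁(m,l) = { x ∈ ℝ⁴ : x₁,x₂,x₃,x₄ ≥ 0, x₁+x₂+x₃+x₄ ≤ m, x₃+x₄ ≥ l } equals (m−l)³(m+3l)/24. -/

import Mathlib

open MeasureTheory Set

lemma L2' (p q : ℝ) : ∫ x in p..q, (q - x) = (q - p)^2/2 := by
  have h : ∀ x ∈ Set.uIcc p q, HasDerivAt (fun x => -(q - x)^2/2) (q - x) x := by
    intro x _
    have h1 : HasDerivAt (fun x : ℝ => q - x) (-1) x := (hasDerivAt_id x).const_sub q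
    have h2 := (h1.fun_pow 2).fun_neg.div_const 2
    refine h2.congr_deriv ?_
    ring
  rw [intervalIntegral.integral_eq_sub_of_hasDerivAt h
    (by apply Continuous.intervalIntegrable; fun_prop)]
  ring

lemma L2 (p q : ℝ) : ∫ d in p..q, (q - d)^2/2 = (q - p)^3/6 := by
  have h : ∀ d ∈ Set.uIcc p q, HasDerivAt (fun d => -(q - d)^3/6) ((q - d)^2/2) d := by
    intro d _
    have h1 : HasDerivAt (fun d : ℝ => q - d) (-1) d := (hasDerivAt_id d).const_sub q
    have h2 := (h1.fun_pow 3).fun_neg.div_const 6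
    refine h2.congr_deriv ?_
    ring
  rw [intervalIntegral.integral_eq_sub_of_hasDerivAt h (by apply Continuous.intervalIntegrable; fun_prop)]
  ring

lemma L3 (p q : ℝ) : ∫ c in p..q, (q - c)^3/6 = (q - p)^4/24 := by
  have h : ∀ c ∈ Set.uIcc p q, HasDerivAt (fun c => -(q - c)^4/24) ((q - c)^3/6) c := by
    intro c _
    have h1 : HasDerivAt (fun c : ℝ => q - c) (-1) c := (hasDerivAt_id c).const_sub q
    have h2 := (h1.fun_pow 4).fun_neg.div_const 24
    refine h2.congr_deriv ?_
    ring
  rw [intervalIntegral.integral_eq_sub_of_hasDerivAt h (by apply Continuous.intervalIntegrable; fun_prop)]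
  ring

lemma L1 {a b : ℝ} (f : ℝ → ℝ) (hab : a ≤ b) (hcont : ContinuousOn f (Icc a b))
    (hpos : ∀ x ∈ Icc a b, 0 ≤ f x) (hneg : ∀ x, b < x → f x ≤ 0) :
    ∫⁻ x in Ici a, ENNReal.ofReal (f x) = ENNReal.ofReal (∫ x in a..b, f x) := by
  have hsplit : Ici a = Icc a b ∪ Ioi b := by
    rw [Icc_union_Ioi_eq_Ici hab]
  rw [hsplit, lintegral_union measurableSet_Ioi (by rw [Set.disjoint_left]; intro x hx hx2; exact absurd hx2 (not_lt.2 hx.2))]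
  have h2 : ∫⁻ x in Ioi b, ENNReal.ofReal (f x) = 0 := by
    rw [setLIntegral_congr_fun measurableSet_Ioi ?_, lintegral_zero]
    · intro x hx
      simpa using ENNReal.ofReal_eq_zero.2 (hneg x hx)
  rw [h2, add_zero]
  rw [← ofReal_integral_eq_lintegral_ofReal (hcont.integrableOn_Icc)
    ((ae_restrict_iff' measurableSet_Icc).2 (Filter.Eventually.of_forall hpos))]
  rw [intervalIntegral.integral_of_le hab, ← integral_Icc_eq_integral_Ioc]

lemma triangle (s : ℝ) : volume {p : ℝ × ℝ | 0 ≤ p.1 ∧ 0 ≤ p.2 ∧ p.1 + p.2 ≤ s}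
    = ENNReal.ofReal ((max s 0)^2/2) := by
  have hmeas : MeasurableSet {p : ℝ × ℝ | 0 ≤ p.1 ∧ 0 ≤ p.2 ∧ p.1 + p.2 ≤ s} := by
    simp only [setOf_and]
    exact (measurableSet_le measurable_const measurable_fst).inter
      ((measurableSet_le measurable_const measurable_snd).inter
        (measurableSet_le (measurable_fst.add measurable_snd) measurable_const))
  rw [Measure.volume_eq_prod, Measure.prod_apply hmeas]
  have hslice : ∀ a : ℝ, volume (Prod.mk a ⁻¹' {p : ℝ × ℝ | 0 ≤ p.1 ∧ 0 ≤ p.2 ∧ p.1 + p.2 ≤ s})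
      = (Ici (0:ℝ)).indicator (fun a => ENNReal.ofReal (max s 0 - a)) a := by
    intro a
    by_cases ha : 0 ≤ a
    · have : Prod.mk a ⁻¹' {p : ℝ × ℝ | 0 ≤ p.1 ∧ 0 ≤ p.2 ∧ p.1 + p.2 ≤ s} = Icc 0 (s - a) := by
        ext b; simp only [mem_preimage, mem_setOf_eq, mem_Icc, ha, true_and]
        constructor
        · rintro ⟨h1, h2⟩; exact ⟨h1, by linarith⟩
        · rintro ⟨h1, h2⟩; exact ⟨h1, by linarith⟩
      rw [this, Real.volume_Icc, indicator_of_mem (mem_Ici.2 ha)]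
      rcases le_or_gt 0 s with hs | hs
      · rw [max_eq_left hs]; congr 1; ring
      · rw [max_eq_right hs.le, ENNReal.ofReal_eq_zero.2 (by linarith : s - a - 0 ≤ 0),
          eq_comm, ENNReal.ofReal_eq_zero]
        linarith
    · have : Prod.mk a ⁻¹' {p : ℝ × ℝ | 0 ≤ p.1 ∧ 0 ≤ p.2 ∧ p.1 + p.2 ≤ s} = ∅ := by
        ext b; simp only [mem_preimage, mem_setOf_eq, mem_empty_iff_false, iff_false]
        rintro ⟨h1, _⟩; exact ha h1
      rw [this, measure_empty, indicator_of_notMem (by simpa using ha)]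
  rw [lintegral_congr hslice, lintegral_indicator measurableSet_Ici]
  rw [L1 (fun a => max s 0 - a) (le_max_right s 0) (by fun_prop)
    (fun x hx => by linarith [hx.2]) (fun x hx => by linarith)]
  rw [L2']
  norm_num

lemma innerD {m l : ℝ} (hl : 0 < l) (hlm : l < m) (c : ℝ) :
    ∫⁻ d, (if 0 ≤ c ∧ 0 ≤ d ∧ l ≤ c + d then ENNReal.ofReal ((max (m - c - d) 0)^2/2) else 0)
      = (Ici (0:ℝ)).indicator (fun c => ENNReal.ofReal ((min (m - l) (m - c))^3/6)) c := by
  by_cases hc : 0 ≤ c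
  · simp only [hc, true_and]
    set d0 := max 0 (l - c) with hd0
    have hind : ∀ d : ℝ, (if 0 ≤ d ∧ l ≤ c + d then ENNReal.ofReal ((max (m - c - d) 0)^2/2) else 0)
        = (Ici d0).indicator (fun d => ENNReal.ofReal ((max (m - c - d) 0)^2/2)) d := by
      intro d
      rw [Set.indicator_apply]
      refine if_congr ?_ rfl rfl
      simp only [mem_Ici, hd0, max_le_iff]
      constructor
      · rintro ⟨h1, h2⟩; exact ⟨h1, by linarith⟩
      · rintro ⟨h1, h2⟩; exact ⟨h1, by linarith⟩
    rw [lintegral_congr hind, lintegral_indicator measurableSet_Ici]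
    rw [L1 (fun d => (max (m - c - d) 0)^2/2) (le_max_left d0 (m - c)) (by fun_prop)
      (fun x _ => by positivity)
      (fun x hx => by
        have : m - c - x < 0 := by
          have := le_max_right d0 (m - c); linarith [lt_of_le_of_lt this hx]
        rw [max_eq_right this.le]; norm_num)]
    rcases le_or_gt c m with hcm | hcm
    · have hb : max d0 (m - c) = m - c := by
        apply max_eq_right
        simp only [hd0, max_le_iff]
        constructor <;> linarith
      rw [hb]
      have hcong : ∀ d ∈ Set.uIcc d0 (m - c), (max (m - c - d) 0)^2/2 = ((m - c) - d)^2/2 := by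
        intro d hd
        have hle : d0 ≤ m - c := by simp only [hd0, max_le_iff]; constructor <;> linarith
        rw [Set.uIcc_of_le hle] at hd
        rw [max_eq_left (by linarith [hd.2])]
      rw [intervalIntegral.integral_congr hcong, L2]
      have hkey : m - c - d0 = min (m - l) (m - c) := by
        rcases max_cases 0 (l - c) with ⟨h1, h2⟩ | ⟨h1, h2⟩
        · rw [hd0, h1, min_eq_right (by linarith), sub_zero]
        · rw [hd0, h1, min_eq_left (by linarith)]; ring
      rw [indicator_of_mem (mem_Ici.2 hc)]
      rw [hkey]
    · have hd00 : d0 = 0 := by simp only [hd0]; apply max_eq_left; linarith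
      have hb : max d0 (m - c) = 0 := by rw [hd00]; apply max_eq_left; linarith
      rw [hb, hd00, intervalIntegral.integral_same, indicator_of_mem (mem_Ici.2 hc)]
      rw [ENNReal.ofReal_zero, eq_comm, ENNReal.ofReal_eq_zero]
      have hmin : min (m - l) (m - c) = m - c := min_eq_right (by linarith)
      rw [hmin]
      have : (m - c)^3 ≤ 0 := Odd.pow_nonpos (by decide) (by linarith)
      linarith
  · have : ∀ d : ℝ, (if 0 ≤ c ∧ 0 ≤ d ∧ l ≤ c + d then ENNReal.ofReal ((max (m - c - d) 0)^2/2) else 0) = 0 := by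
      intro d; rw [if_neg]; rintro ⟨h1, _⟩; exact hc h1
    rw [lintegral_congr this, lintegral_zero, eq_comm]
    exact indicator_of_notMem (by simpa using hc) _

lemma volT {m l : ℝ} (hl : 0 < l) (hlm : l < m) :
    volume {p : ℝ × ℝ × ℝ × ℝ | 0 ≤ p.2.2.1 ∧ 0 ≤ p.2.2.2 ∧
        p.2.2.1 + p.2.2.2 + p.1 + p.2.1 ≤ m ∧ 0 ≤ p.1 ∧ 0 ≤ p.2.1 ∧ l ≤ p.1 + p.2.1}
      = ENNReal.ofReal ((m - l)^3 * (m + 3*l)/24) := by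
  set T : Set (ℝ × ℝ × ℝ × ℝ) := {p | 0 ≤ p.2.2.1 ∧ 0 ≤ p.2.2.2 ∧
      p.2.2.1 + p.2.2.2 + p.1 + p.2.1 ≤ m ∧ 0 ≤ p.1 ∧ 0 ≤ p.2.1 ∧ l ≤ p.1 + p.2.1} with hT_def
  have hT : MeasurableSet T := by
    simp only [hT_def, setOf_and]
    refine MeasurableSet.inter ?_ (MeasurableSet.inter ?_ (MeasurableSet.inter ?_
      (MeasurableSet.inter ?_ (MeasurableSet.inter ?_ ?_)))) <;>
      exact measurableSet_le (by fun_prop) (by fun_prop)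
  rw [Measure.volume_eq_prod, Measure.prod_apply hT]
  have hinner : ∀ c : ℝ, volume (Prod.mk c ⁻¹' T)
      = (Ici (0:ℝ)).indicator (fun c => ENNReal.ofReal ((min (m - l) (m - c))^3/6)) c := by
    intro c
    rw [Measure.volume_eq_prod, Measure.prod_apply (measurable_prodMk_left hT)]
    have hslice : ∀ d : ℝ, volume (Prod.mk d ⁻¹' (Prod.mk c ⁻¹' T))
        = (if 0 ≤ c ∧ 0 ≤ d ∧ l ≤ c + d then
            ENNReal.ofReal ((max (m - c - d) 0)^2/2) else 0) := by
      intro d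
      by_cases h : 0 ≤ c ∧ 0 ≤ d ∧ l ≤ c + d
      · rw [if_pos h]
        have : Prod.mk d ⁻¹' (Prod.mk c ⁻¹' T)
            = {q : ℝ × ℝ | 0 ≤ q.1 ∧ 0 ≤ q.2 ∧ q.1 + q.2 ≤ m - c - d} := by
          ext q
          simp only [hT_def, mem_preimage, mem_setOf_eq]
          constructor
          · rintro ⟨h1, h2, h3, _⟩; exact ⟨h1, h2, by linarith⟩
          · rintro ⟨h1, h2, h3⟩; exact ⟨h1, h2, by linarith, h.1, h.2.1, h.2.2⟩
        rw [this, triangle]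
      · rw [if_neg h]
        have : Prod.mk d ⁻¹' (Prod.mk c ⁻¹' T) = ∅ := by
          ext q
          simp only [hT_def, mem_preimage, mem_setOf_eq, mem_empty_iff_false, iff_false]
          rintro ⟨_, _, _, h4, h5, h6⟩; exact h ⟨h4, h5, h6⟩
        rw [this, measure_empty]
    rw [lintegral_congr hslice, innerD hl hlm c]
  rw [lintegral_congr hinner, lintegral_indicator measurableSet_Ici]
  rw [L1 (fun c => (min (m - l) (m - c))^3/6) (by linarith) (by fun_prop)
    (fun x hx => by
      have h1 : 0 ≤ min (m - l) (m - x) := le_min (by linarith) (by linarith [hx.2])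
      positivity)
    (fun x hx => by
      have h1 : min (m - l) (m - x) = m - x := min_eq_right (by linarith)
      rw [h1]
      have : (m - x)^3 ≤ 0 := Odd.pow_nonpos (by decide) (by linarith)
      linarith)]
  have hi1 : IntervalIntegrable (fun c => (min (m - l) (m - c))^3/6) volume 0 l := by
    apply Continuous.intervalIntegrable; fun_prop
  have hi2 : IntervalIntegrable (fun c => (min (m - l) (m - c))^3/6) volume l m := by
    apply Continuous.intervalIntegrable; fun_prop
  rw [← intervalIntegral.integral_add_adjacent_intervals hi1 hi2]
  have e1 : ∫ c in (0:ℝ)..l, (min (m - l) (m - c))^3/6 = l * ((m - l)^3/6) := by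
    rw [intervalIntegral.integral_congr (g := fun _ => (m - l)^3/6) ?_]
    · rw [intervalIntegral.integral_const, smul_eq_mul, sub_zero]
    · intro x hx
      rw [Set.uIcc_of_le hl.le] at hx
      simp only
      rw [min_eq_left (by linarith [hx.2])]
  have e2 : ∫ c in l..m, (min (m - l) (m - c))^3/6 = (m - l)^4/24 := by
    rw [intervalIntegral.integral_congr (g := fun c => (m - c)^3/6) ?_, L3]
    intro x hx
    rw [Set.uIcc_of_le hlm.le] at hx
    simp only
    rw [min_eq_right (by linarith [hx.1])]
  rw [e1, e2]
  congr 1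
  ring

/-- The volume of `P₁(m, l) = {x ∈ ℝ⁴ : x ≥ 0, Σxᵢ ≤ m, x₃ + x₄ ≥ l}`
is `(m - l)³(m + 3l)/24`. -/
theorem volume_P1 (m l : ℝ) (hm : 4 ≤ m) (hl : 0 < l) (hlm : l < m) :
    MeasureTheory.volume {x : Fin 4 → ℝ | (∀ i, 0 ≤ x i) ∧
        x 0 + x 1 + x 2 + x 3 ≤ m ∧ l ≤ x 2 + x 3} =
      ENNReal.ofReal ((m - l) ^ 3 * (m + 3 * l) / 24) := by
  set F : (Fin 4 → ℝ) → ℝ × ℝ × ℝ × ℝ :=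
    (Prod.map (id : ℝ → ℝ) (Prod.map (id : ℝ → ℝ) (MeasurableEquiv.finTwoArrow (α := ℝ)))) ∘
    (Prod.map (id : ℝ → ℝ) (MeasurableEquiv.piFinSuccAbove (fun _ : Fin 3 => ℝ) 2)) ∘
    (MeasurableEquiv.piFinSuccAbove (fun _ : Fin 4 => ℝ) 2) with hF_def
  have hF : MeasurePreserving F volume volume :=
    (((MeasurePreserving.id volume).prod ((MeasurePreserving.id volume).prod
      (volume_preserving_finTwoArrow ℝ))).comp
      (((MeasurePreserving.id volume).prod
        (volume_preserving_piFinSuccAbove (fun _ : Fin 3 => ℝ) 2)).comp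
        (volume_preserving_piFinSuccAbove (fun _ : Fin 4 => ℝ) 2)))
  have hFx : ∀ x : Fin 4 → ℝ, F x = (x 2, x 3, x 0, x 1) := by
    intro x
    simp [hF_def, MeasurableEquiv.piFinSuccAbove_apply, MeasurableEquiv.finTwoArrow_apply,
      Fin.removeNth, Fin.succAbove, Fin.lt_def]
  have hT : MeasurableSet {p : ℝ × ℝ × ℝ × ℝ | 0 ≤ p.2.2.1 ∧ 0 ≤ p.2.2.2 ∧
      p.2.2.1 + p.2.2.2 + p.1 + p.2.1 ≤ m ∧ 0 ≤ p.1 ∧ 0 ≤ p.2.1 ∧ l ≤ p.1 + p.2.1} := by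
    simp only [setOf_and]
    refine MeasurableSet.inter ?_ (MeasurableSet.inter ?_ (MeasurableSet.inter ?_
      (MeasurableSet.inter ?_ (MeasurableSet.inter ?_ ?_)))) <;>
      exact measurableSet_le (by fun_prop) (by fun_prop)
  have hset : {x : Fin 4 → ℝ | (∀ i, 0 ≤ x i) ∧
        x 0 + x 1 + x 2 + x 3 ≤ m ∧ l ≤ x 2 + x 3}
      = F ⁻¹' {p : ℝ × ℝ × ℝ × ℝ | 0 ≤ p.2.2.1 ∧ 0 ≤ p.2.2.2 ∧
          p.2.2.1 + p.2.2.2 + p.1 + p.2.1 ≤ m ∧ 0 ≤ p.1 ∧ 0 ≤ p.2.1 ∧ l ≤ p.1 + p.2.1} := by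
    ext x
    simp only [mem_setOf_eq, mem_preimage, hFx x]
    constructor
    · rintro ⟨hpos, hsum, hl4⟩
      exact ⟨hpos 0, hpos 1, by linarith, hpos 2, hpos 3, by linarith⟩
    · rintro ⟨h1, h2, h3, h4, h5, h6⟩
      refine ⟨?_, by linarith, by linarith⟩
      intro i; fin_cases i <;> assumption
  rw [hset, hF.measure_preimage hT.nullMeasurableSet]
  exact volT hl hlm
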